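/- Radical axis closing: Let (a₁,b₁), (a₂,b₂) ∈ ℝ² with (a₁,b₁) ≠ (a₂,b₂) and r₁, r₂ > 0, and let B₁, B₂ be the symmetric bilinear forms on ℝ³ obtained by polarizing the quadratic forms q_j(X) = (x₁ − a_j x₃)² + (x₂ − b_j x₃)² − r_j² x₃², defining two circles as conics in the projective plane. Let W be the 2-dimensional subspace of all X ∈ ℝ³ with 2(a₂−a₁)x₁ + 2(b₂−b₁)x₂ + (a₁² + b₁² − r₁² − a₂² − b₂² + r₂²)x₃ = 0 (the radical axis of the two circles, as a projective line; equivalently q₁(X) = q₂(X) on W). If P₁,…,P_{2n} ∈ W \ {0} satisfy B₁(Pᵢ,Pᵢ) ≠ 0 for all i and have the closing property with respect to B₁, then B₂(Pᵢ,Pᵢ) ≠ 0 for all i and P₁,…,P_{2n} have the closing property with respect to B₂. -/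

import Mathlib

/-- Minkowski product on ℝ³. -/
def mink (X Y : Fin 3 → ℝ) : ℝ := X 0 * Y 0 + X 1 * Y 1 - X 2 * Y 2

/-- The reversion map with respect to the (bilinear) form `B` in the point `P`
(with `B P P ≠ 0`): `M_P^B X = B(P,P)X − 2B(X,P)P`. -/
def revB (B : (Fin 3 → ℝ) → (Fin 3 → ℝ) → ℝ) (P X : Fin 3 → ℝ) : Fin 3 → ℝ :=
  B P P • X - (2 * B X P) • P

/-- `chainB B n P X = (M_{P n}^B ∘ ⋯ ∘ M_{P 1}^B) X`, the composition of the reversions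
with respect to `B` in `P 0, …, P (n-1)`, applied in this order. -/
def chainB (B : (Fin 3 → ℝ) → (Fin 3 → ℝ) → ℝ) :
    (n : ℕ) → (Fin n → (Fin 3 → ℝ)) → (Fin 3 → ℝ) → (Fin 3 → ℝ)
  | 0, _, X => X
  | n + 1, P, X => revB B (P (Fin.last n)) (chainB B n (fun i => P i.castSucc) X)

/-- The points `P 0, …, P (n-1)` have the closing property with respect to the form `B`
iff `M_{P n}^B ∘ ⋯ ∘ M_{P 1}^B` is a nonzero scalar multiple of the identity. For
`B = mink` this is the closing property with respect to the conic `C`. -/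
def closesB (B : (Fin 3 → ℝ) → (Fin 3 → ℝ) → ℝ) (n : ℕ) (P : Fin n → (Fin 3 → ℝ)) :
    Prop :=
  ∃ c : ℝ, c ≠ 0 ∧ ∀ X, chainB B n P X = c • X

namespace RadAux

abbrev V := Fin 3 → ℝ

/-- reverse-order chain: `rchainB B n P = M_{P 0} ∘ ⋯ ∘ M_{P (n-1)}`. -/
def rchainB (B : V → V → ℝ) : (n : ℕ) → (Fin n → V) → V → V
  | 0, _, X => X
  | n + 1, P, X => rchainB B n (fun i => P i.castSucc) (revB B (P (Fin.last n)) X)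

variable {B B' : V → V → ℝ} {L : V → ℝ}

/-- Abbreviation for linearity (in the first argument) of `B`. -/
def IsLin (B : V → V → ℝ) : Prop :=
  ∀ (a b : ℝ) (X Y Z : V), B (a • X - b • Y) Z = a * B X Z - b * B Y Z

/-- Abbreviation for linearity of `L`. -/
def IsLinL (L : V → ℝ) : Prop :=
  ∀ (a b : ℝ) (X Y : V), L (a • X - b • Y) = a * L X - b * L Y

lemma lin_add (hB : IsLin B) (a b : ℝ) (X Y Z : V) :
    B (a • X + b • Y) Z = a * B X Z + b * B Y Z := by
  have h := hB a (-b) X Y Z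
  simp only [neg_smul, sub_neg_eq_add] at h
  rw [h]; ring

lemma lin_sub' (hB : IsLin B) (t : ℝ) (X Y Z : V) :
    B (X - t • Y) Z = B X Z - t * B Y Z := by
  have h := hB 1 t X Y Z
  simpa using h

lemma lin_smul (hB : IsLin B) (a : ℝ) (X Z : V) : B (a • X) Z = a * B X Z := by
  have h := hB a 0 X X Z
  simpa using h

lemma lin_neg (hB : IsLin B) (X Z : V) : B (-X) Z = -B X Z := by
  have h := hB 0 1 X X Z
  simpa using h

lemma rev_lin (hB : IsLin B) (P : V) (a b : ℝ) (X Y : V) :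
    revB B P (a • X + b • Y) = a • revB B P X + b • revB B P Y := by
  unfold revB
  rw [lin_add hB]
  funext i
  simp only [Pi.add_apply, Pi.sub_apply, Pi.smul_apply, smul_eq_mul]
  ring

lemma rev_smul (hB : IsLin B) (P : V) (a : ℝ) (X : V) :
    revB B P (a • X) = a • revB B P X := by
  have h := rev_lin hB P a 0 X X
  simpa using h

lemma chain_lin (hB : IsLin B) (n : ℕ) (P : Fin n → V) (a b : ℝ) (X Y : V) :
    chainB B n P (a • X + b • Y) = a • chainB B n P X + b • chainB B n P Y := by
  induction n with
  | zero => rfl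
  | succ m ih =>
      simp only [chainB]
      rw [ih, rev_lin hB]

lemma rev_rev (hB : IsLin B) (P X : V) : revB B P (revB B P X) = (B P P) ^ 2 • X := by
  have h1 : B (revB B P X) P = -(B P P * B X P) := by
    unfold revB
    rw [hB]
    ring
  conv_lhs => rw [revB, h1]
  unfold revB
  funext i
  simp only [Pi.sub_apply, Pi.smul_apply, smul_eq_mul]
  ring

lemma chain_rchain (hB : IsLin B) (n : ℕ) (P : Fin n → V) (X : V) :
    chainB B n P (rchainB B n P X) = ((∏ i, B (P i) (P i)) ^ 2) • X := by
  induction n generalizing X with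
  | zero => simp [chainB, rchainB]
  | succ m ih =>
      simp only [chainB, rchainB]
      rw [ih, rev_smul hB, rev_rev hB, Fin.prod_univ_castSucc, smul_smul]
      ring_nf

lemma rev_adj (hB : IsLin B) (hsym : ∀ X Y, B X Y = B Y X) (P X Y : V) :
    B (revB B P X) Y = B X (revB B P Y) := by
  have e1 : B (revB B P X) Y = B P P * B X Y - 2 * B X P * B P Y := by
    unfold revB; rw [hB]
  have e2 : B (revB B P Y) X = B P P * B Y X - 2 * B Y P * B P X := by
    unfold revB; rw [hB]
  rw [e1, hsym X (revB B P Y), e2, hsym Y X, hsym Y P, hsym P X]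
  ring

lemma chain_adj (hB : IsLin B) (hsym : ∀ X Y, B X Y = B Y X) (n : ℕ) (P : Fin n → V)
    (X Y : V) : B (chainB B n P X) Y = B X (rchainB B n P Y) := by
  induction n generalizing Y with
  | zero => rfl
  | succ m ih =>
      simp only [chainB, rchainB]
      rw [rev_adj hB hsym, ih]

lemma rev_L (hLs : IsLinL L) (P X : V) (hP : L P = 0) :
    L (revB B P X) = B P P * L X := by
  unfold revB
  rw [hLs, hP]; ring

lemma chain_L (hLs : IsLinL L) (n : ℕ) (P : Fin n → V) (hP : ∀ i, L (P i) = 0) (X : V) :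
    L (chainB B n P X) = (∏ i, B (P i) (P i)) * L X := by
  induction n with
  | zero => simp [chainB]
  | succ m ih =>
      simp only [chainB]
      rw [rev_L hLs _ _ (hP (Fin.last m)), ih _ (fun i => hP i.castSucc),
        Fin.prod_univ_castSucc]
      ring

lemma rchain_L (hLs : IsLinL L) (n : ℕ) (P : Fin n → V) (hP : ∀ i, L (P i) = 0) (X : V) :
    L (rchainB B n P X) = (∏ i, B (P i) (P i)) * L X := by
  induction n generalizing X with
  | zero => simp [rchainB]
  | succ m ih =>
      simp only [rchainB]
      rw [ih _ (fun i => hP i.castSucc), rev_L hLs _ _ (hP (Fin.last m)),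
        Fin.prod_univ_castSucc]
      ring

lemma rev_congr (hagree : ∀ X Y : V, L X = 0 → L Y = 0 → B' X Y = B X Y)
    (P X : V) (hP : L P = 0) (hX : L X = 0) :
    revB B' P X = revB B P X := by
  unfold revB
  rw [hagree P P hP hP, hagree X P hX hP]

lemma chain_congr (hLs : IsLinL L)
    (hagree : ∀ X Y : V, L X = 0 → L Y = 0 → B' X Y = B X Y)
    (n : ℕ) (P : Fin n → V) (hP : ∀ i, L (P i) = 0) (X : V)
    (hX : L X = 0) : chainB B' n P X = chainB B n P X := by
  induction n with
  | zero => rfl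
  | succ m ih =>
      simp only [chainB]
      rw [ih _ (fun i => hP i.castSucc)]
      refine rev_congr hagree _ _ (hP (Fin.last m)) ?_
      rw [chain_L hLs _ _ (fun i => hP i.castSucc), hX, mul_zero]

lemma rchain_congr (hLs : IsLinL L)
    (hagree : ∀ X Y : V, L X = 0 → L Y = 0 → B' X Y = B X Y)
    (n : ℕ) (P : Fin n → V) (hP : ∀ i, L (P i) = 0) (X : V)
    (hX : L X = 0) : rchainB B' n P X = rchainB B n P X := by
  induction n generalizing X with
  | zero => rfl
  | succ m ih =>
      simp only [rchainB]
      rw [rev_congr hagree _ _ (hP (Fin.last m)) hX]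
      exact ih _ (fun i => hP i.castSucc) _
        (by rw [rev_L hLs _ _ (hP (Fin.last m)), hX, mul_zero])

end RadAux

open RadAux

/-- **Radical axis closing.** Let `B₁, B₂` be the polarized bilinear forms of two
distinct circles (centers `(a₁,b₁) ≠ (a₂,b₂)`, radii `r₁, r₂ > 0`), viewed as conics in
homogeneous coordinates, and let the points `P 0, …, P (2n-1)` lie on the radical axis
of the two circles. If the `P i` are off the first circle and have the closing property
with respect to `B₁`, then they are off the second circle and have the closing property
with respect to `B₂`. -/
theorem radical_axis_closing
    (a₁ b₁ a₂ b₂ r₁ r₂ : ℝ) (hcent : (a₁, b₁) ≠ (a₂, b₂)) (hr₁ : 0 < r₁) (hr₂ : 0 < r₂)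
    (B₁ B₂ : (Fin 3 → ℝ) → (Fin 3 → ℝ) → ℝ)
    (hB₁ : B₁ = fun X Y => (X 0 - a₁ * X 2) * (Y 0 - a₁ * Y 2) +
      (X 1 - b₁ * X 2) * (Y 1 - b₁ * Y 2) - r₁ ^ 2 * (X 2 * Y 2))
    (hB₂ : B₂ = fun X Y => (X 0 - a₂ * X 2) * (Y 0 - a₂ * Y 2) +
      (X 1 - b₂ * X 2) * (Y 1 - b₂ * Y 2) - r₂ ^ 2 * (X 2 * Y 2))
    (n : ℕ) (P : Fin (2 * n) → (Fin 3 → ℝ))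
    (hP0 : ∀ i, P i ≠ 0)
    (hPW : ∀ i, 2 * (a₂ - a₁) * P i 0 + 2 * (b₂ - b₁) * P i 1 +
      (a₁ ^ 2 + b₁ ^ 2 - r₁ ^ 2 - a₂ ^ 2 - b₂ ^ 2 + r₂ ^ 2) * P i 2 = 0)
    (hPB₁ : ∀ i, B₁ (P i) (P i) ≠ 0)
    (hclose : closesB B₁ (2 * n) P) :
    (∀ i, B₂ (P i) (P i) ≠ 0) ∧ closesB B₂ (2 * n) P := by
  classical
  set L : (Fin 3 → ℝ) → ℝ := fun X =>
    2 * (a₂ - a₁) * X 0 + 2 * (b₂ - b₁) * X 1 +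
      (a₁ ^ 2 + b₁ ^ 2 - r₁ ^ 2 - a₂ ^ 2 - b₂ ^ 2 + r₂ ^ 2) * X 2 with hLdef
  have hLP : ∀ i, L (P i) = 0 := fun i => hPW i
  have hLs : IsLinL L := by
    intro a b X Y
    simp only [hLdef, Pi.sub_apply, Pi.smul_apply, smul_eq_mul]
    ring
  have hlin₁ : IsLin B₁ := by
    intro a b X Y Z
    simp only [hB₁, Pi.sub_apply, Pi.smul_apply, smul_eq_mul]
    ring
  have hlin₂ : IsLin B₂ := by
    intro a b X Y Z
    simp only [hB₂, Pi.sub_apply, Pi.smul_apply, smul_eq_mul]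
    ring
  have hsym₂ : ∀ X Y, B₂ X Y = B₂ Y X := by
    intro X Y; simp only [hB₂]; ring
  have hagree : ∀ X Y, L X = 0 → L Y = 0 → B₂ X Y = B₁ X Y := by
    intro X Y hX hY
    have h : B₂ X Y - B₁ X Y = -(X 2 * L Y + Y 2 * L X) / 2 := by
      simp only [hB₁, hB₂, hLdef]; ring
    rw [hX, hY] at h
    simp at h
    linarith
  have hπ₂ : ∀ i, B₂ (P i) (P i) = B₁ (P i) (P i) :=
    fun i => hagree _ _ (hLP i) (hLP i)
  obtain ⟨c, hc, hcX⟩ := hclose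
  -- the test vector Z off the radical axis
  set Z : Fin 3 → ℝ := ![2 * (a₂ - a₁), 2 * (b₂ - b₁), 0] with hZdef
  have hLZ : L Z = (2 * (a₂ - a₁)) ^ 2 + (2 * (b₂ - b₁)) ^ 2 := by
    simp only [hLdef, hZdef]
    norm_num [Matrix.cons_val_zero, Matrix.cons_val_one, Matrix.cons_val_two, Matrix.head_cons]
    ring
  have hLZne : L Z ≠ 0 := by
    rw [hLZ]
    rcases not_and_or.mp (by simpa [Prod.ext_iff] using hcent) with h | h
    · have h' : (2 * (a₂ - a₁)) ≠ 0 := by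
        intro hh; apply h; linarith [hh]
      have := lt_of_le_of_ne (sq_nonneg (2 * (a₂ - a₁))) (Ne.symm (pow_ne_zero 2 h'))
      nlinarith [sq_nonneg (2 * (b₂ - b₁))]
    · have h' : (2 * (b₂ - b₁)) ≠ 0 := by
        intro hh; apply h; linarith [hh]
      have := lt_of_le_of_ne (sq_nonneg (2 * (b₂ - b₁))) (Ne.symm (pow_ne_zero 2 h'))
      nlinarith [sq_nonneg (2 * (a₂ - a₁))]
  -- the closing constant is the product of the B-squares
  have hcπ : c = ∏ i, B₁ (P i) (P i) := by
    have h1 := chain_L (B := B₁) hLs (2 * n) P hLP Z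
    rw [hcX Z] at h1
    have h2 : L (c • Z) = c * L Z := by
      simp only [hLdef, Pi.smul_apply, smul_eq_mul]; ring
    rw [h2] at h1
    exact mul_right_cancel₀ hLZne h1
  have hprodc : (∏ i, B₂ (P i) (P i)) = c := by
    rw [hcπ]; exact Finset.prod_congr rfl (fun i _ => hπ₂ i)
  refine ⟨fun i => by rw [hπ₂ i]; exact hPB₁ i, c, hc, fun X => ?_⟩
  -- chains agree on the radical axis
  have hCu : ∀ u, L u = 0 → chainB B₂ (2 * n) P u = c • u := by
    intro u hu
    rw [chain_congr hLs hagree (2 * n) P hLP u hu, hcX u]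
  have hR1 : ∀ u, rchainB B₁ (2 * n) P u = c • u := by
    intro u
    have ht := chain_rchain hlin₁ (2 * n) P u
    rw [hcX (rchainB B₁ (2 * n) P u)] at ht
    have h3 : c • rchainB B₁ (2 * n) P u = c • (c • u) := by
      rw [ht, smul_smul, hcπ, pow_two]
    exact smul_right_injective (Fin 3 → ℝ) hc h3
  have hRu : ∀ u, L u = 0 → rchainB B₂ (2 * n) P u = c • u := fun u hu =>
    (rchain_congr hLs hagree (2 * n) P hLP u hu).trans (hR1 u)
  -- the defect w := chainB₂ Z - c • Z
  have hLA : L (chainB B₂ (2 * n) P Z) = c * L Z := by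
    rw [chain_L (B := B₂) hLs (2 * n) P hLP Z, hprodc]
  have hsub1 : ∀ (Y W : Fin 3 → ℝ) (t : ℝ), L (Y - t • W) = L Y - t * L W := by
    intro Y W t
    have h := hLs 1 t Y W
    simpa using h
  have hLw : L (chainB B₂ (2 * n) P Z - c • Z) = 0 := by
    rw [hsub1, hLA]; ring
  -- w is B₂-orthogonal to the radical axis
  have hworthu : ∀ u, L u = 0 → B₂ (chainB B₂ (2 * n) P Z - c • Z) u = 0 := by
    intro u hu
    rw [lin_sub' hlin₂, chain_adj hlin₂ hsym₂ (2 * n) P Z u, hRu u hu]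
    have h5 : B₂ Z (c • u) = c * B₂ Z u := by
      rw [hsym₂ Z (c • u), lin_smul hlin₂, hsym₂ u Z]
    rw [h5]; ring
  -- w is B₂-orthogonal to Z
  have hwZ : B₂ (chainB B₂ (2 * n) P Z - c • Z) Z = 0 := by
    have htel := chain_rchain hlin₂ (2 * n) P Z
    rw [hprodc] at htel
    have hLw' : L (rchainB B₂ (2 * n) P Z - c • Z) = 0 := by
      rw [hsub1, rchain_L hLs (2 * n) P hLP Z, hprodc]; ring
    have hsplitR : rchainB B₂ (2 * n) P Z
        = c • Z + (rchainB B₂ (2 * n) P Z - c • Z) := by abel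
    have hlc := chain_lin hlin₂ (2 * n) P c 1 Z (rchainB B₂ (2 * n) P Z - c • Z)
    simp only [one_smul] at hlc
    rw [hsplitR, hlc, hCu _ hLw'] at htel
    have h4 : chainB B₂ (2 * n) P Z + (rchainB B₂ (2 * n) P Z - c • Z) = c • Z := by
      apply smul_right_injective (Fin 3 → ℝ) hc
      show c • (chainB B₂ (2 * n) P Z + (rchainB B₂ (2 * n) P Z - c • Z)) = c • (c • Z)
      rw [smul_add, smul_smul, ← pow_two]
      exact htel
    have hw' : rchainB B₂ (2 * n) P Z - c • Z
        = -(chainB B₂ (2 * n) P Z - c • Z) := by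
      have h6 := eq_sub_of_add_eq' h4
      rw [h6, neg_sub]
    have hadj := chain_adj hlin₂ hsym₂ (2 * n) P Z Z
    rw [hsym₂ Z (rchainB B₂ (2 * n) P Z)] at hadj
    have e1 : B₂ (chainB B₂ (2 * n) P Z - c • Z) Z
        = B₂ (chainB B₂ (2 * n) P Z) Z - c * B₂ Z Z := lin_sub' hlin₂ c _ Z Z
    have e2 : B₂ (rchainB B₂ (2 * n) P Z - c • Z) Z
        = B₂ (rchainB B₂ (2 * n) P Z) Z - c * B₂ Z Z := lin_sub' hlin₂ c _ Z Z
    have e3 : B₂ (-(chainB B₂ (2 * n) P Z - c • Z)) Z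
        = -B₂ (chainB B₂ (2 * n) P Z - c • Z) Z := lin_neg hlin₂ _ Z
    rw [hw', e3, e1] at e2
    rw [e1]
    linarith
  -- hence w is B₂-orthogonal to everything
  have hworth : ∀ Y, B₂ (chainB B₂ (2 * n) P Z - c • Z) Y = 0 := by
    intro Y
    have hu : L (Y - (L Y / L Z) • Z) = 0 := by
      rw [hsub1, div_mul_cancel₀ _ hLZne, sub_self]
    have h7 := hworthu (Y - (L Y / L Z) • Z) hu
    have h8 : B₂ (chainB B₂ (2 * n) P Z - c • Z) (Y - (L Y / L Z) • Z)
        = B₂ (chainB B₂ (2 * n) P Z - c • Z) Y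
          - (L Y / L Z) * B₂ (chainB B₂ (2 * n) P Z - c • Z) Z := by
      rw [hsym₂ _ (Y - (L Y / L Z) • Z), lin_sub' hlin₂,
        hsym₂ Y _, hsym₂ Z _]
    rw [h8, hwZ] at h7
    linarith
  -- nondegeneracy of B₂ : w = 0
  have hw0 : chainB B₂ (2 * n) P Z - c • Z = 0 := by
    set w := chainB B₂ (2 * n) P Z - c • Z with hwdef
    have g0 := hworth ![1, 0, 0]
    have g1 := hworth ![0, 1, 0]
    have g2 := hworth ![0, 0, 1]
    simp only [hB₂, Matrix.cons_val_zero, Matrix.cons_val_one, Matrix.cons_val_two, Matrix.head_cons] at g0 g1 g2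
    norm_num at g0 g1 g2
    have hr : r₂ ^ 2 ≠ 0 := pow_ne_zero 2 (ne_of_gt hr₂)
    have hw2 : w 2 = 0 := by
      have h9 : r₂ ^ 2 * w 2 = 0 := by linear_combination (-a₂) * g0 - b₂ * g1 - g2
      exact (mul_eq_zero.mp h9).resolve_left hr
    have hwa : w 0 = 0 := by linear_combination g0 + a₂ * hw2
    have hwb : w 1 = 0 := by linear_combination g1 + b₂ * hw2
    funext i
    fin_cases i <;> simp [hwa, hwb, hw2]
  have hAZ : chainB B₂ (2 * n) P Z = c • Z := sub_eq_zero.mp hw0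
  -- conclude for an arbitrary X
  have hu : L (X - (L X / L Z) • Z) = 0 := by
    rw [hsub1, div_mul_cancel₀ _ hLZne, sub_self]
  have hXsplit : X = (L X / L Z) • Z + (X - (L X / L Z) • Z) := by abel
  have hlc := chain_lin hlin₂ (2 * n) P (L X / L Z) 1 Z (X - (L X / L Z) • Z)
  simp only [one_smul] at hlc
  conv_lhs => rw [hXsplit]
  rw [hlc, hAZ, hCu _ hu]
  module
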